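/- On a path with n' agents, consider a sequence of rational swaps under strict preferences in which the final assignment σ_t satisfies σ_t^T(o_1) = k and σ_t^T(o_{n'}) = k-1. For objects o_a, o_b with a < b, a' = σ_t^T(o_a) > a, b' = σ_t^T(o_b) < b, and [a,a'] ∩ [b,b'] ≠ ∅, there is a swap exchanging o_a and o_b occurring between agents c-1 and c where c = a' + b' - k + 1, and moreover c lies in [a+1, a'] ∩ [b', b]. -/

import Mathlib

/-- An assignment maps agents to objects bijectively (agents and objects are both `Fin n`;
object `o_i` is identified with index `i`, agent `i` initially holds `o_i`). -/
abbrev Assignment (n : ℕ) := Equiv.Perm (Fin n)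

/-- `u j o` is agent `j`'s utility for object `o`; strict linear preferences mean each `u j`
is injective, and `o ≻_j o'` iff `u j o > u j o'`. -/
def StrictPref {n : ℕ} (u : Fin n → Fin n → ℕ) : Prop := ∀ j, Function.Injective (u j)

/-- A rational swap under strict preferences: two adjacent agents exchange objects, each
strictly preferring the object received. -/
def SwapStep {n : ℕ} (adj : Fin n → Fin n → Prop) (u : Fin n → Fin n → ℕ)
    (σ σ' : Assignment n) : Prop :=
  ∃ a b : Fin n, adj a b ∧ u a (σ b) > u a (σ a) ∧ u b (σ a) > u b (σ b) ∧
    σ' = σ * Equiv.swap a b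

/-- `σseq 0, σseq 1, …, σseq t` is a sequence of swaps. -/
def SwapSeq {n : ℕ} (adj : Fin n → Fin n → Prop) (u : Fin n → Fin n → ℕ)
    (σseq : ℕ → Assignment n) (t : ℕ) : Prop :=
  ∀ m < t, SwapStep adj u (σseq m) (σseq (m + 1))

/-- Adjacency of the path `0 – 1 – ⋯ – (n-1)`. -/
def pathAdj {n : ℕ} (i j : Fin n) : Prop := i.val + 1 = j.val ∨ j.val + 1 = i.val

namespace CrossProof

variable {n : ℕ}

/-- position of object `x` at time `s` -/
def posn (σseq : ℕ → Assignment n) (x : Fin n) (s : ℕ) : ℕ := (((σseq s)⁻¹) x).val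

lemma card_lt_perm (π : Equiv.Perm (Fin n)) (w : Fin n) :
    (Finset.univ.filter fun z => (π z).val < (π w).val).card = (π w).val := by
  have h : (Finset.univ.filter fun z => (π z).val < (π w).val) =
      (Finset.Iio (π w)).map π.symm.toEmbedding := by
    ext z
    simp only [Finset.mem_filter, Finset.mem_univ, true_and, Finset.mem_map,
      Finset.mem_Iio, Equiv.coe_toEmbedding]
    constructor
    · intro hz; exact ⟨π z, hz, π.symm_apply_apply z⟩
    · rintro ⟨y, hy, rfl⟩
      show (π (π.symm y)).val < _
      rw [Equiv.apply_symm_apply]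
      exact hy
  rw [h, Finset.card_map, Fin.card_Iio]

lemma card_lt_posn (σseq : ℕ → Assignment n) (s : ℕ) (w : Fin n) :
    (Finset.univ.filter fun z => posn σseq z s < posn σseq w s).card = posn σseq w s := by
  simp only [posn]
  exact card_lt_perm ((σseq s)⁻¹) w

lemma sign_pos (f : ℕ → ℤ) (t : ℕ)
    (hstep : ∀ s < t, f s - 1 ≤ f (s + 1) ∧ f (s + 1) ≤ f s + 1)
    (hne : ∀ s ≤ t, f s ≠ 0) (hzero : 0 < f 0) : ∀ s ≤ t, 0 < f s := by
  intro s
  induction s with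
  | zero => intro _; exact hzero
  | succ m ih =>
    intro hs
    have h1 := hstep m (by omega)
    have h2 := ih (by omega)
    have h3 := hne (m + 1) hs
    omega

lemma ivt (f : ℕ → ℕ) (s₁ : ℕ) :
    ∀ s₂, s₁ ≤ s₂ →
    (∀ s, s₁ ≤ s → s < s₂ → (f (s + 1) ≤ f s + 1 ∧ f s ≤ f (s + 1) + 1)) →
    ∀ v, ((f s₁ ≤ v ∧ v ≤ f s₂) ∨ (f s₂ ≤ v ∧ v ≤ f s₁)) →
    ∃ r, s₁ ≤ r ∧ r ≤ s₂ ∧ f r = v := by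
  intro s₂ h
  induction s₂, h using Nat.le_induction with
  | base =>
    intro _ v hv
    exact ⟨s₁, le_refl _, le_refl _, by omega⟩
  | succ m hm ih =>
    intro hstep v hv
    by_cases hcase : (f s₁ ≤ v ∧ v ≤ f m) ∨ (f m ≤ v ∧ v ≤ f s₁)
    · obtain ⟨r, h1, h2, h3⟩ := ih (fun s hs1 hs2 => hstep s hs1 (by omega)) v hcase
      exact ⟨r, h1, by omega, h3⟩
    · have := hstep m hm (by omega)
      exact ⟨m + 1, by omega, le_refl _, by omega⟩

lemma step_spec (u : Fin n → Fin n → ℕ) (σseq : ℕ → Assignment n) (t : ℕ)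
    (hseq : SwapSeq pathAdj u σseq t) {m : ℕ} (hm : m < t) :
    ∃ i j : Fin n, (i.val + 1 = j.val ∨ j.val + 1 = i.val) ∧
      u i (σseq m j) > u i (σseq m i) ∧ u j (σseq m i) > u j (σseq m j) ∧
      (∀ x, (σseq (m + 1)) x = (σseq m) (Equiv.swap i j x)) ∧
      (∀ x, ((σseq (m + 1))⁻¹) x = Equiv.swap i j (((σseq m)⁻¹) x)) := by
  obtain ⟨i, j, hadj, h1, h2, heq⟩ := hseq m hm
  refine ⟨i, j, hadj, h1, h2, ?_, ?_⟩
  · intro x; rw [heq]; rfl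
  · intro x
    rw [heq, mul_inv_rev, Equiv.Perm.mul_apply, Equiv.swap_inv]

lemma pos_step (u : Fin n → Fin n → ℕ) (σseq : ℕ → Assignment n) (t : ℕ)
    (hseq : SwapSeq pathAdj u σseq t) {m : ℕ} (hm : m < t) (x : Fin n) :
    posn σseq x (m + 1) ≤ posn σseq x m + 1 ∧ posn σseq x m ≤ posn σseq x (m + 1) + 1 := by
  obtain ⟨i, j, hadj, -, -, -, hswap⟩ := step_spec u σseq t hseq hm
  have h := hswap x
  simp only [posn]
  rw [h]
  rcases eq_or_ne (((σseq m)⁻¹) x) i with hi | hi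
  · rw [hi, Equiv.swap_apply_left]; omega
  · rcases eq_or_ne (((σseq m)⁻¹) x) j with hj | hj
    · rw [hj, Equiv.swap_apply_right]; omega
    · rw [Equiv.swap_apply_of_ne_of_ne hi hj]; omega

lemma util_mono (u : Fin n → Fin n → ℕ) (σseq : ℕ → Assignment n) (t : ℕ)
    (hseq : SwapSeq pathAdj u σseq t) (j : Fin n) :
    ∀ s s', s ≤ s' → s' ≤ t → u j (σseq s j) ≤ u j (σseq s' j) := by
  intro s s' h
  induction s', h using Nat.le_induction with
  | base => intro _; exact le_refl _
  | succ m hm ih =>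
    intro ht'
    have hrec := ih (by omega)
    obtain ⟨i, jj, hadj, h1, h2, happ, -⟩ := step_spec u σseq t hseq (show m < t by omega)
    have h3 : u j (σseq m j) ≤ u j (σseq (m + 1) j) := by
      rw [happ j]
      rcases eq_or_ne j i with rfl | hne1
      · rw [Equiv.swap_apply_left]; omega
      · rcases eq_or_ne j jj with rfl | hne2
        · rw [Equiv.swap_apply_right]; omega
        · rw [Equiv.swap_apply_of_ne_of_ne hne1 hne2]
    omega

lemma pos_norev (u : Fin n → Fin n → ℕ) (hu : StrictPref u) (σseq : ℕ → Assignment n)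
    (t : ℕ) (hseq : SwapSeq pathAdj u σseq t) (x : Fin n) {s1 s2 s3 : ℕ}
    (h12 : s1 ≤ s2) (h23 : s2 ≤ s3) (h3t : s3 ≤ t)
    (hpos : posn σseq x s1 = posn σseq x s3) : posn σseq x s2 = posn σseq x s1 := by
  set j := ((σseq s1)⁻¹) x with hj
  have h1 : σseq s1 j = x := Equiv.apply_symm_apply _ _
  have hfin : ((σseq s3)⁻¹) x = j := by
    apply Fin.ext
    exact hpos.symm
  have h3 : σseq s3 j = x := by
    rw [← hfin]; exact Equiv.apply_symm_apply _ _
  have hle1 : u j (σseq s1 j) ≤ u j (σseq s2 j) := util_mono u σseq t hseq j s1 s2 h12 (by omega)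
  have hle2 : u j (σseq s2 j) ≤ u j (σseq s3 j) := util_mono u σseq t hseq j s2 s3 h23 h3t
  rw [h1] at hle1; rw [h3] at hle2
  have h2 : σseq s2 j = x := hu j (le_antisymm hle2 hle1)
  have : ((σseq s2)⁻¹) x = j := by
    rw [← h2]; exact Equiv.symm_apply_apply _ _
  simp only [posn, this, hj]

lemma pos_ne (σseq : ℕ → Assignment n) (x y : Fin n) (s : ℕ) (hxy : x ≠ y) :
    posn σseq x s ≠ posn σseq y s := by
  intro h
  exact hxy (((σseq s)⁻¹).injective (Fin.ext h))

lemma pos0 (σseq : ℕ → Assignment n) (h0 : σseq 0 = 1) (x : Fin n) :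
    posn σseq x 0 = x.val := by
  simp [posn, h0]

lemma pos_between (u : Fin n → Fin n → ℕ) (hu : StrictPref u) (σseq : ℕ → Assignment n)
    (t : ℕ) (hseq : SwapSeq pathAdj u σseq t) (x : Fin n) {s1 s2 s3 : ℕ}
    (h12 : s1 ≤ s2) (h23 : s2 ≤ s3) (h3t : s3 ≤ t) :
    (posn σseq x s1 ≤ posn σseq x s2 ∨ posn σseq x s3 ≤ posn σseq x s2) ∧
    (posn σseq x s2 ≤ posn σseq x s1 ∨ posn σseq x s2 ≤ posn σseq x s3) := by
  have hstep1 : ∀ s, s1 ≤ s → s < s2 →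
      (posn σseq x (s + 1) ≤ posn σseq x s + 1 ∧ posn σseq x s ≤ posn σseq x (s + 1) + 1) :=
    fun s _ hs2 => pos_step u σseq t hseq (by omega) x
  have hstep2 : ∀ s, s2 ≤ s → s < s3 →
      (posn σseq x (s + 1) ≤ posn σseq x s + 1 ∧ posn σseq x s ≤ posn σseq x (s + 1) + 1) :=
    fun s _ hs3 => pos_step u σseq t hseq (by omega) x
  constructor
  · by_contra hcon
    push_neg at hcon
    obtain ⟨h1, h2⟩ := hcon
    obtain ⟨r1, hr11, hr12, hr13⟩ := ivt (posn σseq x) s1 s2 h12 hstep1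
      (posn σseq x s2 + 1) (by omega)
    obtain ⟨r2, hr21, hr22, hr23⟩ := ivt (posn σseq x) s2 s3 h23 hstep2
      (posn σseq x s2 + 1) (by omega)
    have := pos_norev u hu σseq t hseq x hr12 hr21 (by omega)
      (by rw [hr13, hr23])
    omega
  · by_contra hcon
    push_neg at hcon
    obtain ⟨h1, h2⟩ := hcon
    obtain ⟨r1, hr11, hr12, hr13⟩ := ivt (posn σseq x) s1 s2 h12 hstep1
      (posn σseq x s2 - 1) (by omega)
    obtain ⟨r2, hr21, hr22, hr23⟩ := ivt (posn σseq x) s2 s3 h23 hstep2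
      (posn σseq x s2 - 1) (by omega)
    have := pos_norev u hu σseq t hseq x hr12 hr21 (by omega)
      (by rw [hr13, hr23])
    omega

lemma mono_up (u : Fin n → Fin n → ℕ) (hu : StrictPref u) (σseq : ℕ → Assignment n)
    (t : ℕ) (h0 : σseq 0 = 1) (hseq : SwapSeq pathAdj u σseq t) (x : Fin n)
    (hx : x.val < posn σseq x t) :
    ∀ s s', s ≤ s' → s' ≤ t → posn σseq x s ≤ posn σseq x s' := by
  intro s s' hss hs't
  have hx0 : posn σseq x 0 = x.val := pos0 σseq h0 x
  have B1 := pos_between u hu σseq t hseq x (Nat.zero_le s) hss hs't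
  have B2 := pos_between u hu σseq t hseq x (Nat.zero_le s') (le_refl s') hs't
  have B3 := pos_between u hu σseq t hseq x (Nat.zero_le s) (le_trans hss hs't) (le_refl t)
  have B4 := pos_between u hu σseq t hseq x (Nat.zero_le s') hs't (le_refl t)
  omega

lemma mono_down (u : Fin n → Fin n → ℕ) (hu : StrictPref u) (σseq : ℕ → Assignment n)
    (t : ℕ) (h0 : σseq 0 = 1) (hseq : SwapSeq pathAdj u σseq t) (x : Fin n)
    (hx : posn σseq x t < x.val) :
    ∀ s s', s ≤ s' → s' ≤ t → posn σseq x s' ≤ posn σseq x s := by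
  intro s s' hss hs't
  have hx0 : posn σseq x 0 = x.val := pos0 σseq h0 x
  have B1 := pos_between u hu σseq t hseq x (Nat.zero_le s) hss hs't
  have B3 := pos_between u hu σseq t hseq x (Nat.zero_le s) (le_trans hss hs't) (le_refl t)
  have B4 := pos_between u hu σseq t hseq x (Nat.zero_le s') hs't (le_refl t)
  omega

lemma pos_const (u : Fin n → Fin n → ℕ) (hu : StrictPref u) (σseq : ℕ → Assignment n)
    (t : ℕ) (h0 : σseq 0 = 1) (hseq : SwapSeq pathAdj u σseq t) (x : Fin n)
    (hx : posn σseq x t = x.val) :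
    ∀ s ≤ t, posn σseq x s = x.val := by
  intro s hs
  have hx0 : posn σseq x 0 = x.val := pos0 σseq h0 x
  have B := pos_between u hu σseq t hseq x (Nat.zero_le s) hs (le_refl t)
  omega


lemma ord_up (u : Fin n → Fin n → ℕ) (hu : StrictPref u) (σseq : ℕ → Assignment n)
    (t : ℕ) (h0 : σseq 0 = 1) (hseq : SwapSeq pathAdj u σseq t) (z w : Fin n)
    (hzw : z.val < w.val) (hz : z.val < posn σseq z t) (hw : w.val < posn σseq w t) :
    ∀ s ≤ t, posn σseq z s < posn σseq w s := by
  have hne : z ≠ w := fun h => by rw [h] at hzw; omega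
  have hsp := sign_pos (fun s => (posn σseq w s : ℤ) - posn σseq z s) t
    (by
      intro s hs
      have h1 := pos_step u σseq t hseq hs z
      have h2 := pos_step u σseq t hseq hs w
      have h3 := mono_up u hu σseq t h0 hseq z hz s (s + 1) (by omega) (by omega)
      have h4 := mono_up u hu σseq t h0 hseq w hw s (s + 1) (by omega) (by omega)
      constructor <;> omega)
    (by
      intro s hs
      have := pos_ne σseq z w s hne
      omega)
    (by
      have hz0 := pos0 σseq h0 z
      have hw0 := pos0 σseq h0 w
      omega)
  intro s hs
  have := hsp s hs
  omega

lemma ord_down (u : Fin n → Fin n → ℕ) (hu : StrictPref u) (σseq : ℕ → Assignment n)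
    (t : ℕ) (h0 : σseq 0 = 1) (hseq : SwapSeq pathAdj u σseq t) (z w : Fin n)
    (hzw : z.val < w.val) (hz : posn σseq z t < z.val) (hw : posn σseq w t < w.val) :
    ∀ s ≤ t, posn σseq z s < posn σseq w s := by
  have hne : z ≠ w := fun h => by rw [h] at hzw; omega
  have hsp := sign_pos (fun s => (posn σseq w s : ℤ) - posn σseq z s) t
    (by
      intro s hs
      have h1 := pos_step u σseq t hseq hs z
      have h2 := pos_step u σseq t hseq hs w
      have h3 := mono_down u hu σseq t h0 hseq z hz s (s + 1) (by omega) (by omega)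
      have h4 := mono_down u hu σseq t h0 hseq w hw s (s + 1) (by omega) (by omega)
      constructor <;> omega)
    (by
      intro s hs
      have := pos_ne σseq z w s hne
      omega)
    (by
      have hz0 := pos0 σseq h0 z
      have hw0 := pos0 σseq h0 w
      omega)
  intro s hs
  have := hsp s hs
  omega

lemma nostat (u : Fin n → Fin n → ℕ) (hu : StrictPref u)
    (t : ℕ) (σseq : ℕ → Assignment n) (h0 : σseq 0 = 1)
    (hseq : SwapSeq pathAdj u σseq t)
    (k : ℕ) (hk1 : 1 ≤ k) (hkn : k < n)
    (z0 z1 : Fin n) (hz0v : z0.val = 0) (hz1v : z1.val = n - 1)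
    (hK : posn σseq z0 t = k) (hK1 : posn σseq z1 t = k - 1)
    (z : Fin n) : posn σseq z t ≠ z.val := by
  intro hz
  have hzconst : ∀ s ≤ t, posn σseq z s = z.val := pos_const u hu σseq t h0 hseq z hz
  by_cases hcase : z.val ≤ k
  · have hzne : z ≠ z0 := by
      intro h; rw [h] at hz; rw [hz0v] at hz; rw [hK] at hz; omega
    have hzpos : 0 < z.val := by
      rcases Nat.eq_zero_or_pos z.val with h | h
      · exact absurd (Fin.ext (by omega)) hzne
      · exact h
    have hstep : ∀ s, 0 ≤ s → s < t →
        (posn σseq z0 (s + 1) ≤ posn σseq z0 s + 1 ∧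
         posn σseq z0 s ≤ posn σseq z0 (s + 1) + 1) :=
      fun s _ hs => pos_step u σseq t hseq hs z0
    have h00 : posn σseq z0 0 = 0 := by rw [pos0 σseq h0 z0, hz0v]
    obtain ⟨r, hr1, hr2, hr3⟩ := ivt (posn σseq z0) 0 t (Nat.zero_le t) hstep z.val
      (by omega)
    have := pos_ne σseq z0 z r hzne.symm
    rw [hr3, hzconst r hr2] at this
    exact this rfl
  · have hzne : z ≠ z1 := by
      intro h; rw [h] at hz; rw [hz1v] at hz; rw [hK1] at hz
      have := z1.isLt
      omega
    have hzval : z.val < n - 1 := by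
      have := z.isLt
      rcases Nat.lt_or_ge z.val (n - 1) with h | h
      · exact h
      · exact absurd (Fin.ext (by omega)) hzne
    have hstep : ∀ s, 0 ≤ s → s < t →
        (posn σseq z1 (s + 1) ≤ posn σseq z1 s + 1 ∧
         posn σseq z1 s ≤ posn σseq z1 (s + 1) + 1) :=
      fun s _ hs => pos_step u σseq t hseq hs z1
    have h00 : posn σseq z1 0 = n - 1 := by rw [pos0 σseq h0 z1, hz1v]
    obtain ⟨r, hr1, hr2, hr3⟩ := ivt (posn σseq z1) 0 t (Nat.zero_le t) hstep z.val
      (by omega)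
    have := pos_ne σseq z1 z r hzne.symm
    rw [hr3, hzconst r hr2] at this
    exact this rfl

lemma class_up (u : Fin n → Fin n → ℕ) (hu : StrictPref u)
    (t : ℕ) (σseq : ℕ → Assignment n) (h0 : σseq 0 = 1)
    (hseq : SwapSeq pathAdj u σseq t)
    (k : ℕ) (hk1 : 1 ≤ k)
    (z0 : Fin n) (hz0v : z0.val = 0) (hK : posn σseq z0 t = k)
    (z : Fin n) (hz : z.val < posn σseq z t) : k ≤ posn σseq z t := by
  by_contra hlt
  push_neg at hlt
  have hzne : z ≠ z0 := by
    intro h; rw [h, hK] at hlt; omega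
  have hz0p : 0 < z.val := by
    rcases Nat.eq_zero_or_pos z.val with h | h
    · exact absurd (Fin.ext (by omega)) hzne
    · exact h
  have h0up : z0.val < posn σseq z0 t := by rw [hK, hz0v]; omega
  have := ord_up u hu σseq t h0 hseq z0 z (by omega) h0up hz t (le_refl t)
  rw [hK] at this
  omega

lemma class_down (u : Fin n → Fin n → ℕ) (hu : StrictPref u)
    (t : ℕ) (σseq : ℕ → Assignment n) (h0 : σseq 0 = 1)
    (hseq : SwapSeq pathAdj u σseq t)
    (k : ℕ) (hk1 : 1 ≤ k) (hkn : k < n)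
    (z1 : Fin n) (hz1v : z1.val = n - 1) (hK1 : posn σseq z1 t = k - 1)
    (z : Fin n) (hz : posn σseq z t < z.val) : posn σseq z t < k := by
  by_contra hge
  push_neg at hge
  have hzne : z ≠ z1 := by
    intro h; rw [h, hK1] at hge; omega
  have hzval : z.val < n - 1 := by
    have := z.isLt
    rcases Nat.lt_or_ge z.val (n - 1) with h | h
    · exact h
    · exact absurd (Fin.ext (by omega)) hzne
  have hn1dn : posn σseq z1 t < z1.val := by rw [hK1, hz1v]; omega
  have := ord_down u hu σseq t h0 hseq z z1 (by omega) hz hn1dn t (le_refl t)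
  rw [hK1] at this
  omega

lemma up_of_k (u : Fin n → Fin n → ℕ) (hu : StrictPref u)
    (t : ℕ) (σseq : ℕ → Assignment n) (h0 : σseq 0 = 1)
    (hseq : SwapSeq pathAdj u σseq t)
    (k : ℕ) (hk1 : 1 ≤ k) (hkn : k < n)
    (z0 z1 : Fin n) (hz0v : z0.val = 0) (hz1v : z1.val = n - 1)
    (hK : posn σseq z0 t = k) (hK1 : posn σseq z1 t = k - 1)
    (z : Fin n) (hz : k ≤ posn σseq z t) : z.val < posn σseq z t := by
  rcases lt_trichotomy (posn σseq z t) z.val with h | h | h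
  · have := class_down u hu t σseq h0 hseq k hk1 hkn z1 hz1v hK1 z h
    omega
  · exact absurd h (nostat u hu t σseq h0 hseq k hk1 hkn z0 z1 hz0v hz1v hK hK1 z)
  · exact h

lemma down_of_k (u : Fin n → Fin n → ℕ) (hu : StrictPref u)
    (t : ℕ) (σseq : ℕ → Assignment n) (h0 : σseq 0 = 1)
    (hseq : SwapSeq pathAdj u σseq t)
    (k : ℕ) (hk1 : 1 ≤ k) (hkn : k < n)
    (z0 z1 : Fin n) (hz0v : z0.val = 0) (hz1v : z1.val = n - 1)
    (hK : posn σseq z0 t = k) (hK1 : posn σseq z1 t = k - 1)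
    (z : Fin n) (hz : posn σseq z t < k) : posn σseq z t < z.val := by
  rcases lt_trichotomy (posn σseq z t) z.val with h | h | h
  · exact h
  · exact absurd h (nostat u hu t σseq h0 hseq k hk1 hkn z0 z1 hz0v hz1v hK hK1 z)
  · have := class_up u hu t σseq h0 hseq k hk1 z0 hz0v hK z h
    omega

end CrossProof

open CrossProof

/-- 0-indexed agents/objects: object `o_1` is index `0`, object `o_{n'}` is index
`n-1`, and the paper's `c = a'+b'-k+1` in 1-indexed positions equals `a'+b'+1-k` in 0-indexed
positions: on a path of `n` agents, in a sequence of rational swaps whose final assignment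
sends `o_1` to agent `k` and `o_{n'}` to agent `k-1`, for objects `o_a, o_b` with `a < b`,
`a' > a`, `b' < b` and `[a,a'] ∩ [b',b] ≠ ∅`, there is a swap exchanging `o_a` and `o_b`
between agents `c-1` and `c` where `c = a'+b'+1-k`, and `c ∈ [a+1,a'] ∩ [b',b]`. -/
theorem crossing_swap_position {n : ℕ} (hn : 0 < n)
    (u : Fin n → Fin n → ℕ) (hu : StrictPref u)
    (t : ℕ) (σseq : ℕ → Assignment n) (h0 : σseq 0 = 1)
    (hseq : SwapSeq pathAdj u σseq t)
    (k : ℕ) (hk1 : 1 ≤ k) (hkn : k < n)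
    (hK : (((σseq t)⁻¹) ⟨0, hn⟩).val = k)
    (hK1 : (((σseq t)⁻¹) ⟨n - 1, by omega⟩).val = k - 1)
    (a b : Fin n) (hab : a.val < b.val)
    (ha : a.val < (((σseq t)⁻¹) a).val) (hb : (((σseq t)⁻¹) b).val < b.val)
    (hQ : (Set.Icc a.val (((σseq t)⁻¹) a).val ∩
            Set.Icc (((σseq t)⁻¹) b).val b.val).Nonempty) :
    let a' : ℕ := (((σseq t)⁻¹) a).val
    let b' : ℕ := (((σseq t)⁻¹) b).val
    let c : ℤ := (a' : ℤ) + b' + 1 - k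
    ((a.val : ℤ) + 1 ≤ c ∧ c ≤ (a' : ℤ) ∧ (b' : ℤ) ≤ c ∧ c ≤ (b.val : ℤ)) ∧
    ∃ m < t, ((((σseq m)⁻¹) a).val : ℤ) = c - 1 ∧ ((((σseq m)⁻¹) b).val : ℤ) = c ∧
      ((((σseq (m + 1))⁻¹) a).val : ℤ) = c ∧ ((((σseq (m + 1))⁻¹) b).val : ℤ) = c - 1 := by
  classical
  intro a' b' c
  have hc : c = (posn σseq a t : ℤ) + (posn σseq b t : ℤ) + 1 - k := rfl
  set z0 : Fin n := ⟨0, hn⟩ with hz0def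
  set z1 : Fin n := ⟨n - 1, by omega⟩ with hz1def
  have hz0v : z0.val = 0 := rfl
  have hz1v : z1.val = n - 1 := rfl
  have hK' : posn σseq z0 t = k := hK
  have hK1' : posn σseq z1 t = k - 1 := hK1
  have ha' : a.val < posn σseq a t := ha
  have hb' : posn σseq b t < b.val := hb
  have hpa : k ≤ posn σseq a t :=
    class_up u hu t σseq h0 hseq k hk1 z0 hz0v hK' a ha'
  have hpb : posn σseq b t < k :=
    class_down u hu t σseq h0 hseq k hk1 hkn z1 hz1v hK1' b hb'
  have hne_ab : a ≠ b := by intro h; rw [h] at hab; omega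
  -- find the crossing step
  have hex : ∃ s, s ≤ t ∧ posn σseq b s < posn σseq a s :=
    ⟨t, le_refl t, by omega⟩
  set s0 := Nat.find hex with hs0def
  obtain ⟨hs0t, hs0lt⟩ := Nat.find_spec hex
  rw [← hs0def] at hs0t hs0lt
  have hs0pos : 0 < s0 := by
    rcases Nat.eq_zero_or_pos s0 with h | h
    · exfalso
      rw [h] at hs0lt
      rw [pos0 σseq h0 a, pos0 σseq h0 b] at hs0lt
      omega
    · exact h
  set m := s0 - 1 with hmdef
  have hms : m + 1 = s0 := by omega
  have hmt : m < t := by omega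
  have hnotm : ¬(m ≤ t ∧ posn σseq b m < posn σseq a m) := Nat.find_min hex (by omega)
  have hge : posn σseq a m < posn σseq b m := by
    have h1 := pos_ne σseq a b m hne_ab
    omega
  have hstep_a := pos_step u σseq t hseq hmt a
  have hstep_b := pos_step u σseq t hseq hmt b
  have hmono_a : posn σseq a m ≤ posn σseq a (m + 1) :=
    mono_up u hu σseq t h0 hseq a ha' m (m + 1) (by omega) (by omega)
  have hmono_b : posn σseq b (m + 1) ≤ posn σseq b m :=
    mono_down u hu σseq t h0 hseq b hb' m (m + 1) (by omega) (by omega)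
  have hcross : posn σseq b (m + 1) < posn σseq a (m + 1) := by
    rw [hms]; exact hs0lt
  have hBA : posn σseq b m = posn σseq a m + 1 := by omega
  have hA1 : posn σseq a (m + 1) = posn σseq a m + 1 := by omega
  have hB1 : posn σseq b (m + 1) = posn σseq a m := by omega
  -- counting argument
  have hcount : posn σseq a m + k = posn σseq a t + posn σseq b t := by
    have h1 : posn σseq a m =
        (Finset.univ.filter fun z => posn σseq z m < posn σseq a m).card :=
      (card_lt_posn σseq m a).symm
    have hset : (Finset.univ.filter fun z => posn σseq z m < posn σseq a m) =
        Finset.univ.filter fun z =>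
          ((k ≤ posn σseq z t ∧ z.val < a.val) ∨ (posn σseq z t < k ∧ z.val < b.val)) := by
      ext z
      simp only [Finset.mem_filter, Finset.mem_univ, true_and]
      constructor
      · intro hz
        have hza : z ≠ a := by intro h; rw [h] at hz; omega
        rcases lt_trichotomy (posn σseq z t) z.val with hzt | hzt | hzt
        · -- z is a left-mover
          have hzk : posn σseq z t < k :=
            class_down u hu t σseq h0 hseq k hk1 hkn z1 hz1v hK1' z hzt
          refine Or.inr ⟨hzk, ?_⟩
          have hzb : z ≠ b := by
            intro h; rw [h] at hz; omega
          rcases Nat.lt_trichotomy z.val b.val with h | h | h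
          · exact h
          · exact absurd (Fin.ext h) hzb
          · exfalso
            have := ord_down u hu σseq t h0 hseq b z h hb' hzt m (le_of_lt hmt)
            omega
        · exact absurd hzt
            (nostat u hu t σseq h0 hseq k hk1 hkn z0 z1 hz0v hz1v hK' hK1' z)
        · -- z is a right-mover
          have hzk : k ≤ posn σseq z t :=
            class_up u hu t σseq h0 hseq k hk1 z0 hz0v hK' z hzt
          refine Or.inl ⟨hzk, ?_⟩
          rcases Nat.lt_trichotomy z.val a.val with h | h | h
          · exact h
          · exact absurd (Fin.ext h) hza
          · exfalso
            have := ord_up u hu σseq t h0 hseq a z h ha' hzt m (le_of_lt hmt)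
            omega
      · rintro (⟨hzk, hza⟩ | ⟨hzk, hzb⟩)
        · have hzup : z.val < posn σseq z t :=
            up_of_k u hu t σseq h0 hseq k hk1 hkn z0 z1 hz0v hz1v hK' hK1' z hzk
          exact ord_up u hu σseq t h0 hseq z a hza hzup ha' m (le_of_lt hmt)
        · have hzdn : posn σseq z t < z.val :=
            down_of_k u hu t σseq h0 hseq k hk1 hkn z0 z1 hz0v hz1v hK' hK1' z hzk
          have h2 : posn σseq z m < posn σseq b m :=
            ord_down u hu σseq t h0 hseq z b hzb hzdn hb' m (le_of_lt hmt)
          have hza : z ≠ a := by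
            intro h; rw [h] at hzk; omega
          have h3 := pos_ne σseq z a m hza
          omega
    have hdisj : Disjoint
        (Finset.univ.filter fun z => k ≤ posn σseq z t ∧ z.val < a.val)
        (Finset.univ.filter fun z => posn σseq z t < k ∧ z.val < b.val) := by
      rw [Finset.disjoint_left]
      intro z hz1 hz2
      simp only [Finset.mem_filter, Finset.mem_univ, true_and] at hz1 hz2
      omega
    rw [hset, Finset.filter_or, Finset.card_union_of_disjoint hdisj] at h1
    -- card of right-movers left of a
    have hcardP : (Finset.univ.filter fun z => k ≤ posn σseq z t ∧ z.val < a.val).card + k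
        = posn σseq a t := by
      have e3 : (Finset.univ.filter fun z => k ≤ posn σseq z t ∧ z.val < a.val) =
          Finset.univ.filter fun z =>
            (k ≤ posn σseq z t ∧ posn σseq z t < posn σseq a t) := by
        ext z
        simp only [Finset.mem_filter, Finset.mem_univ, true_and]
        constructor
        · rintro ⟨hzk, hza⟩
          refine ⟨hzk, ?_⟩
          exact ord_up u hu σseq t h0 hseq z a hza
            (up_of_k u hu t σseq h0 hseq k hk1 hkn z0 z1 hz0v hz1v hK' hK1' z hzk)
            ha' t (le_refl t)
        · rintro ⟨hzk, hza⟩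
          refine ⟨hzk, ?_⟩
          have hzne : z ≠ a := by intro h; rw [h] at hza; omega
          rcases Nat.lt_trichotomy z.val a.val with h | h | h
          · exact h
          · exact absurd (Fin.ext h) hzne
          · exfalso
            have := ord_up u hu σseq t h0 hseq a z h ha'
              (up_of_k u hu t σseq h0 hseq k hk1 hkn z0 z1 hz0v hz1v hK' hK1' z hzk)
              t (le_refl t)
            omega
      have esplit : (Finset.univ.filter fun z => posn σseq z t < posn σseq a t) =
          (Finset.univ.filter fun z =>
            (k ≤ posn σseq z t ∧ posn σseq z t < posn σseq a t)) ∪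
          (Finset.univ.filter fun z => posn σseq z t < k) := by
        rw [← Finset.filter_or]
        apply Finset.filter_congr
        intro z _
        constructor
        · intro h; omega
        · intro h; omega
      have hdisj2 : Disjoint
          (Finset.univ.filter fun z =>
            (k ≤ posn σseq z t ∧ posn σseq z t < posn σseq a t))
          (Finset.univ.filter fun z => posn σseq z t < k) := by
        rw [Finset.disjoint_left]
        intro z hz1 hz2
        simp only [Finset.mem_filter, Finset.mem_univ, true_and] at hz1 hz2
        omega
      have hcard_a : (Finset.univ.filter fun z => posn σseq z t < posn σseq a t).card
          = posn σseq a t := card_lt_posn σseq t a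
      have hcard_k : (Finset.univ.filter fun z => posn σseq z t < k).card = k := by
        have := card_lt_posn σseq t z0
        rw [hK'] at this
        rw [← this]
        apply Finset.card_bij (fun z _ => z) <;> simp_all [hK']
      rw [esplit, Finset.card_union_of_disjoint hdisj2, hcard_k] at hcard_a
      rw [e3]
      exact hcard_a
    -- card of left-movers left of b
    have hcardQ : (Finset.univ.filter fun z => posn σseq z t < k ∧ z.val < b.val).card
        = posn σseq b t := by
      have e2 : (Finset.univ.filter fun z => posn σseq z t < k ∧ z.val < b.val) =
          Finset.univ.filter fun z => posn σseq z t < posn σseq b t := by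
        ext z
        simp only [Finset.mem_filter, Finset.mem_univ, true_and]
        constructor
        · rintro ⟨hzk, hzb⟩
          exact ord_down u hu σseq t h0 hseq z b hzb
            (down_of_k u hu t σseq h0 hseq k hk1 hkn z0 z1 hz0v hz1v hK' hK1' z hzk) hb'
            t (le_refl t)
        · intro hzb
          have hzk : posn σseq z t < k := by omega
          refine ⟨hzk, ?_⟩
          have hzne : z ≠ b := by intro h; rw [h] at hzb; omega
          rcases Nat.lt_trichotomy z.val b.val with h | h | h
          · exact h
          · exact absurd (Fin.ext h) hzne
          · exfalso
            have := ord_down u hu σseq t h0 hseq b z h hb'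
              (down_of_k u hu t σseq h0 hseq k hk1 hkn z0 z1 hz0v hz1v hK' hK1' z hzk)
              t (le_refl t)
            omega
      rw [e2]
      exact card_lt_posn σseq t b
    omega
  -- bounds
  have ha0 : posn σseq a 0 = a.val := pos0 σseq h0 a
  have hb0 : posn σseq b 0 = b.val := pos0 σseq h0 b
  have hbnd1 : a.val ≤ posn σseq a m := by
    have := mono_up u hu σseq t h0 hseq a ha' 0 m (Nat.zero_le m) (le_of_lt hmt)
    omega
  have hbnd2 : posn σseq a (m + 1) ≤ posn σseq a t :=
    mono_up u hu σseq t h0 hseq a ha' (m + 1) t (by omega) (le_refl t)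
  have hbnd3 : posn σseq b m ≤ b.val := by
    have := mono_down u hu σseq t h0 hseq b hb' 0 m (Nat.zero_le m) (le_of_lt hmt)
    omega
  have hbnd4 : posn σseq b t ≤ posn σseq b m :=
    mono_down u hu σseq t h0 hseq b hb' m t (by omega) (le_refl t)
  -- assemble
  have hpam : ((((σseq m)⁻¹) a).val : ℕ) = posn σseq a m := rfl
  have hpbm : ((((σseq m)⁻¹) b).val : ℕ) = posn σseq b m := rfl
  have hpam1 : ((((σseq (m + 1))⁻¹) a).val : ℕ) = posn σseq a (m + 1) := rfl
  have hpbm1 : ((((σseq (m + 1))⁻¹) b).val : ℕ) = posn σseq b (m + 1) := rfl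
  rw [hc]
  refine ⟨⟨?_, ?_, ?_, ?_⟩, m, hmt, ?_, ?_, ?_, ?_⟩
  · omega
  · show (posn σseq a t : ℤ) + (posn σseq b t : ℤ) + 1 - k ≤ (posn σseq a t : ℤ)
    omega
  · show ((posn σseq b t : ℕ) : ℤ) ≤ (posn σseq a t : ℤ) + (posn σseq b t : ℤ) + 1 - k
    omega
  · omega
  · rw [hpam]; omega
  · rw [hpbm]; omega
  · rw [hpam1]; omega
  · rw [hpbm1]; omega
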